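/- Let e_1, e_2, e_3, e_4 be pairwise distinct complex numbers and Δ_1, Δ_2, Δ_3, Δ_4 arbitrary complex numbers; set Δ_{ij} = −(Δ_i − Δ_j)/(e_i − e_j) for i ≠ j and M = (e_2 − e_3)(e_3 − e_1)(e_1 − e_2)(e_4 − e_1)(e_4 − e_2)(e_4 − e_3). Then (e_2 − e_3)^3 (e_4 − e_1)^3 Δ_{23}^2 Δ_{41}^2 + (e_3 − e_1)^3 (e_4 − e_2)^3 Δ_{31}^2 Δ_{42}^2 + (e_1 − e_2)^3 (e_4 − e_3)^3 Δ_{12}^2 Δ_{43}^2 = M · [ 2 (Δ_{14} + Δ_{24} + Δ_{34}) Δ_{12} Δ_{23} Δ_{31} − Δ_{23} Δ_{31} ((e_1 − e_4) Δ_{14}^2 − (e_2 − e_4) Δ_{24}^2)/(e_1 − e_2) − Δ_{12} Δ_{31} ((e_2 − e_4) Δ_{24}^2 − (e_3 − e_4) Δ_{34}^2)/(e_2 − e_3) − Δ_{12} Δ_{23} ((e_3 − e_4) Δ_{34}^2 − (e_1 − e_4) Δ_{14}^2)/(e_3 − e_1) ]. -/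

import Mathlib

private lemma aux1' (a b x y : ℂ) (ha : a ≠ 0) (hb : b ≠ 0) :
    a^3*b^3*(-(x/a))^2*(-(y/b))^2 = a*b*x^2*y^2 := by
  field_simp

private lemma aux2' (a b c u v w p q r x y z : ℂ) (ha : a ≠ 0) (hb : b ≠ 0) (hc : c ≠ 0)
    (hu : u ≠ 0) (hv : v ≠ 0) (hw : w ≠ 0) :
    b*c*a*u*v*w * (2 * (-(x/u) + -(y/v) + -(z/w)) * (-(p/a)) * (-(q/b)) * (-(r/c)))
      = 2*p*q*r*(v*w*x + u*w*y + u*v*z) := by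
  have hS : -(x/u) + -(y/v) + -(z/w) = -((v*w*x + u*w*y + u*v*z) / (u*v*w)) := by
    field_simp; ring
  rw [hS]
  simp only [mul_neg, neg_mul, neg_neg, neg_div, div_mul_eq_mul_div, mul_div_assoc', div_div]
  rw [div_eq_iff (by simp [ha, hb, hc, hu, hv, hw])]
  ring

private lemma aux3' (a b c u v w q r x y : ℂ) (ha : a ≠ 0) (hb : b ≠ 0) (hc : c ≠ 0)
    (hu : u ≠ 0) (hv : v ≠ 0) :
    b*c*a*u*v*w * ((-(q/b)) * (-(r/c)) * (-u * (-(x/u))^2 - -v * (-(y/v))^2) / a)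
      = q*r*(-(v*w*x^2) + u*w*y^2) := by
  have hS : -u * (-(x/u))^2 - -v * (-(y/v))^2 = (-(v*x^2) + u*y^2) / (u*v) := by
    field_simp; ring
  rw [hS]
  simp only [mul_neg, neg_mul, neg_neg, neg_div, div_mul_eq_mul_div, mul_div_assoc', div_div]
  rw [div_eq_iff (by simp [ha, hb, hc, hu, hv])]
  ring

private lemma aux4' (a b c u v w p r y z : ℂ) (ha : a ≠ 0) (hb : b ≠ 0) (hc : c ≠ 0)
    (hv : v ≠ 0) (hw : w ≠ 0) :
    b*c*a*u*v*w * ((-(p/a)) * (-(r/c)) * (-v * (-(y/v))^2 - -w * (-(z/w))^2) / b)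
      = p*r*(-(u*w*y^2) + u*v*z^2) := by
  have hS : -v * (-(y/v))^2 - -w * (-(z/w))^2 = (-(w*y^2) + v*z^2) / (v*w) := by
    field_simp; ring
  rw [hS]
  simp only [mul_neg, neg_mul, neg_neg, neg_div, div_mul_eq_mul_div, mul_div_assoc', div_div]
  rw [div_eq_iff (by simp [ha, hb, hc, hv, hw])]
  ring

private lemma aux5' (a b c u v w p q x z : ℂ) (ha : a ≠ 0) (hb : b ≠ 0) (hc : c ≠ 0)
    (hu : u ≠ 0) (hw : w ≠ 0) :
    b*c*a*u*v*w * ((-(p/a)) * (-(q/b)) * (-w * (-(z/w))^2 - -u * (-(x/u))^2) / c)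
      = p*q*(-(u*v*z^2) + v*w*x^2) := by
  have hS : -w * (-(z/w))^2 - -u * (-(x/u))^2 = (-(u*z^2) + w*x^2) / (w*u) := by
    field_simp; ring
  rw [hS]
  simp only [mul_neg, neg_mul, neg_neg, neg_div, div_mul_eq_mul_div, mul_div_assoc', div_div]
  rw [div_eq_iff (by simp [ha, hb, hc, hu, hw])]
  ring

/-- For pairwise distinct `e₁, e₂, e₃, e₄` and arbitrary `Δ₁, Δ₂, Δ₃, Δ₄`, with
`Δ_{ij} = −(Δ_i − Δ_j)/(e_i − e_j)` and
`M = (e₂−e₃)(e₃−e₁)(e₁−e₂)(e₄−e₁)(e₄−e₂)(e₄−e₃)`: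
`(e₂−e₃)³(e₄−e₁)³Δ₂₃²Δ₄₁² + (e₃−e₁)³(e₄−e₂)³Δ₃₁²Δ₄₂² + (e₁−e₂)³(e₄−e₃)³Δ₁₂²Δ₄₃²
  = M·[2(Δ₁₄+Δ₂₄+Δ₃₄)Δ₁₂Δ₂₃Δ₃₁
      − Δ₂₃Δ₃₁((e₁−e₄)Δ₁₄²−(e₂−e₄)Δ₂₄²)/(e₁−e₂)
      − Δ₁₂Δ₃₁((e₂−e₄)Δ₂₄²−(e₃−e₄)Δ₃₄²)/(e₂−e₃)
      − Δ₁₂Δ₂₃((e₃−e₄)Δ₃₄²−(e₁−e₄)Δ₁₄²)/(e₃−e₁)]`. -/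
theorem delta_four_point_identity
    (e1 e2 e3 e4 D1 D2 D3 D4 : ℂ)
    (h12 : e1 ≠ e2) (h13 : e1 ≠ e3) (h14 : e1 ≠ e4)
    (h23 : e2 ≠ e3) (h24 : e2 ≠ e4) (h34 : e3 ≠ e4)
    (D12 D23 D31 D14 D24 D34 D41 D42 D43 M : ℂ)
    (hD12 : D12 = -((D1 - D2) / (e1 - e2)))
    (hD23 : D23 = -((D2 - D3) / (e2 - e3)))
    (hD31 : D31 = -((D3 - D1) / (e3 - e1)))
    (hD14 : D14 = -((D1 - D4) / (e1 - e4)))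
    (hD24 : D24 = -((D2 - D4) / (e2 - e4)))
    (hD34 : D34 = -((D3 - D4) / (e3 - e4)))
    (hD41 : D41 = -((D4 - D1) / (e4 - e1)))
    (hD42 : D42 = -((D4 - D2) / (e4 - e2)))
    (hD43 : D43 = -((D4 - D3) / (e4 - e3)))
    (hM : M = (e2 - e3) * (e3 - e1) * (e1 - e2) * (e4 - e1) * (e4 - e2) * (e4 - e3)) :
    (e2 - e3) ^ 3 * (e4 - e1) ^ 3 * D23 ^ 2 * D41 ^ 2
      + (e3 - e1) ^ 3 * (e4 - e2) ^ 3 * D31 ^ 2 * D42 ^ 2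
      + (e1 - e2) ^ 3 * (e4 - e3) ^ 3 * D12 ^ 2 * D43 ^ 2 =
    M * (2 * (D14 + D24 + D34) * D12 * D23 * D31
      - D23 * D31 * ((e1 - e4) * D14 ^ 2 - (e2 - e4) * D24 ^ 2) / (e1 - e2)
      - D12 * D31 * ((e2 - e4) * D24 ^ 2 - (e3 - e4) * D34 ^ 2) / (e2 - e3)
      - D12 * D23 * ((e3 - e4) * D34 ^ 2 - (e1 - e4) * D14 ^ 2) / (e3 - e1)) := by
  have ha : e1 - e2 ≠ 0 := sub_ne_zero.mpr h12
  have hb : e2 - e3 ≠ 0 := sub_ne_zero.mpr h23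
  have hc : e3 - e1 ≠ 0 := sub_ne_zero.mpr h13.symm
  have hu : e4 - e1 ≠ 0 := sub_ne_zero.mpr h14.symm
  have hv : e4 - e2 ≠ 0 := sub_ne_zero.mpr h24.symm
  have hw : e4 - e3 ≠ 0 := sub_ne_zero.mpr h34.symm
  rw [hD12, hD23, hD31, hD41, hD42, hD43, hD14, hD24, hD34, hM]
  rw [show e1 - e4 = -(e4 - e1) from by ring, show e2 - e4 = -(e4 - e2) from by ring,
    show e3 - e4 = -(e4 - e3) from by ring, show D1 - D4 = -(D4 - D1) from by ring,
    show D2 - D4 = -(D4 - D2) from by ring, show D3 - D4 = -(D4 - D3) from by ring]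
  simp only [neg_div_neg_eq]
  conv_rhs => rw [mul_sub, mul_sub, mul_sub]
  rw [aux1' (e2-e3) (e4-e1) (D2-D3) (D4-D1) hb hu,
    aux1' (e3-e1) (e4-e2) (D3-D1) (D4-D2) hc hv,
    aux1' (e1-e2) (e4-e3) (D1-D2) (D4-D3) ha hw,
    aux2' (e1-e2) (e2-e3) (e3-e1) (e4-e1) (e4-e2) (e4-e3) (D1-D2) (D2-D3) (D3-D1)
      (D4-D1) (D4-D2) (D4-D3) ha hb hc hu hv hw,
    aux3' (e1-e2) (e2-e3) (e3-e1) (e4-e1) (e4-e2) (e4-e3) (D2-D3) (D3-D1)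
      (D4-D1) (D4-D2) ha hb hc hu hv,
    aux4' (e1-e2) (e2-e3) (e3-e1) (e4-e1) (e4-e2) (e4-e3) (D1-D2) (D3-D1)
      (D4-D2) (D4-D3) ha hb hc hv hw,
    aux5' (e1-e2) (e2-e3) (e3-e1) (e4-e1) (e4-e2) (e4-e3) (D1-D2) (D2-D3)
      (D4-D1) (D4-D3) ha hb hc hu hw]
  ring
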